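/- Let L be a strictly lower triangular real n×n matrix, D a diagonal real n×n matrix with positive diagonal entries, and D^{−1/2} the diagonal matrix with entries (D_ii)^{−1/2}. Let μ := λ_min(D^{−1/2}(L + Lᵀ)D^{−1/2}) + 1 and ρ_s := λ_max(D^{−1/2}(L + Lᵀ)D^{−1/2}) + 2 λ_max(D^{−1/2} L D⁻¹ Lᵀ D^{−1/2}) + 1, where λ_min and λ_max denote the least and greatest elements of the real spectrum of the indicated symmetric matrices. For ω ∈ ℝ, define the symmetric matrix G(ω) := (ω² − 2ω + 2) I + ω² D^{−1/2}(L + Lᵀ)D^{−1/2} + 2ω² D^{−1/2} L D⁻¹ Lᵀ D^{−1/2}. Then every eigenvalue λ in the real spectrum of G(ω) satisfies μω² − 2ω + 2 ≤ λ ≤ ρ_s ω² − 2ω + 2. -/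

import Mathlib

open Matrix Pointwise

/-- The diagonal matrix `D^{-1/2}` with entries `(D_ii)^{-1/2}`. -/
noncomputable def dhalf {n : ℕ} (D : Matrix (Fin n) (Fin n) ℝ) :
    Matrix (Fin n) (Fin n) ℝ :=
  Matrix.diagonal fun i => (Real.sqrt (D i i))⁻¹

/-- The symmetric matrix
`G(ω) = (ω² − 2ω + 2) I + ω² D^{-1/2}(L + Lᵀ)D^{-1/2} + 2ω² D^{-1/2} L D⁻¹ Lᵀ D^{-1/2}`. -/
noncomputable def ssorG {n : ℕ} (L D : Matrix (Fin n) (Fin n) ℝ) (ω : ℝ) :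
    Matrix (Fin n) (Fin n) ℝ :=
  (ω ^ 2 - 2 * ω + 2) • (1 : Matrix (Fin n) (Fin n) ℝ) +
    ω ^ 2 • (dhalf D * (L + Lᵀ) * dhalf D) +
    (2 * ω ^ 2) • (dhalf D * L * D⁻¹ * Lᵀ * dhalf D)

/-- nonnegativity of spectrum of a PSD real matrix -/
lemma aux_spec_nonneg {n : ℕ} {S : Matrix (Fin n) (Fin n) ℝ} (hS : S.PosSemidef)
    {lam : ℝ} (h : lam ∈ spectrum ℝ S) : 0 ≤ lam := by
  rw [hS.1.spectrum_real_eq_range_eigenvalues] at h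
  obtain ⟨i, rfl⟩ := h
  exact hS.eigenvalues_nonneg i

lemma aux_psd_add {n : ℕ} {M N : Matrix (Fin n) (Fin n) ℝ} (hM : M.PosSemidef)
    (hN : N.PosSemidef) : (M + N).PosSemidef := by
  refine ⟨hM.1.add hN.1, fun x => ?_⟩
  have := add_nonneg (hM.2 x) (hN.2 x)
  simpa [mul_add, add_mul] using this

lemma aux_psd_smul {n : ℕ} {M : Matrix (Fin n) (Fin n) ℝ} (hM : M.PosSemidef)
    {c : ℝ} (hc : 0 ≤ c) : (c • M).PosSemidef := by
  refine ⟨?_, fun x => ?_⟩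
  · have hMt : Mᵀ = M := by
      have := hM.1.eq
      rwa [Matrix.conjTranspose_eq_transpose_of_trivial] at this
    unfold Matrix.IsHermitian
    simp [hMt]
  · have := mul_nonneg hc (hM.2 x)
    exact (hM.smul hc).2 x

lemma aux_herm_smul_one {n : ℕ} (c : ℝ) :
    (c • (1 : Matrix (Fin n) (Fin n) ℝ)).IsHermitian := by
  unfold Matrix.IsHermitian
  simp

/-- If all of the real spectrum of a Hermitian matrix is `≥ c`, then `S - c•1` is PSD. -/
lemma aux_psd_of_lb {n : ℕ} {S : Matrix (Fin n) (Fin n) ℝ} (hS : S.IsHermitian)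
    {c : ℝ} (h : ∀ lam ∈ spectrum ℝ S, c ≤ lam) : (S - c • 1).PosSemidef := by
  have hS' : (S - c • 1).IsHermitian := hS.sub (aux_herm_smul_one c)
  refine hS'.posSemidef_iff_eigenvalues_nonneg.2 fun i => ?_
  have hmem := hS'.eigenvalues_mem_spectrum_real i
  have hspec : spectrum ℝ (S - c • 1) = spectrum ℝ S - ({c} : Set ℝ) := by
    rw [show S - c • 1 = S - algebraMap ℝ (Matrix (Fin n) (Fin n) ℝ) c from by
      rw [Algebra.algebraMap_eq_smul_one], ← spectrum.sub_singleton_eq]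
  rw [hspec] at hmem
  obtain ⟨x, hx, y, hy, hxy⟩ := hmem
  simp only [Set.mem_singleton_iff] at hy
  subst hy
  have := h x hx
  rw [← hxy]
  simp only [Pi.zero_apply]
  linarith

/-- If all of the real spectrum of a Hermitian matrix is `≤ c`, then `c•1 - S` is PSD. -/
lemma aux_psd_of_ub {n : ℕ} {S : Matrix (Fin n) (Fin n) ℝ} (hS : S.IsHermitian)
    {c : ℝ} (h : ∀ lam ∈ spectrum ℝ S, lam ≤ c) : (c • 1 - S).PosSemidef := by
  have hS' : (c • (1 : Matrix (Fin n) (Fin n) ℝ) - S).IsHermitian :=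
    (aux_herm_smul_one c).sub hS
  refine hS'.posSemidef_iff_eigenvalues_nonneg.2 fun i => ?_
  have hmem := hS'.eigenvalues_mem_spectrum_real i
  have hspec : spectrum ℝ (c • (1 : Matrix (Fin n) (Fin n) ℝ) - S) = ({c} : Set ℝ) - spectrum ℝ S := by
    rw [show c • (1 : Matrix (Fin n) (Fin n) ℝ) - S
      = algebraMap ℝ (Matrix (Fin n) (Fin n) ℝ) c - S from by
      rw [Algebra.algebraMap_eq_smul_one], ← spectrum.singleton_sub_eq]
  rw [hspec] at hmem
  obtain ⟨x, hx, y, hy, hxy⟩ := hmem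
  simp only [Set.mem_singleton_iff] at hx
  subst hx
  have := h y hy
  rw [← hxy]
  simp only [Pi.zero_apply]
  linarith

theorem stmt_18 {n : ℕ} (L D : Matrix (Fin n) (Fin n) ℝ)
    (hL : ∀ i j : Fin n, i ≤ j → L i j = 0)
    (hD : D.IsDiag) (hDpos : ∀ i, 0 < D i i)
    -- `lmin` is the least element of the real spectrum of `D^{-1/2}(L + Lᵀ)D^{-1/2}`,
    -- so that `μ = lmin + 1`
    (lmin : ℝ)
    (hmemmin : lmin ∈ spectrum ℝ (dhalf D * (L + Lᵀ) * dhalf D))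
    (hmin : ∀ lam ∈ spectrum ℝ (dhalf D * (L + Lᵀ) * dhalf D), lmin ≤ lam)
    -- `lmax₁` is the greatest element of the real spectrum of `D^{-1/2}(L + Lᵀ)D^{-1/2}`
    (lmax₁ : ℝ)
    (hmemmax₁ : lmax₁ ∈ spectrum ℝ (dhalf D * (L + Lᵀ) * dhalf D))
    (hmax₁ : ∀ lam ∈ spectrum ℝ (dhalf D * (L + Lᵀ) * dhalf D), lam ≤ lmax₁)
    -- `lmax₂` is the greatest element of the real spectrum of `D^{-1/2} L D⁻¹ Lᵀ D^{-1/2}`,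
    -- so that `ρ_s = lmax₁ + 2·lmax₂ + 1`
    (lmax₂ : ℝ)
    (hmemmax₂ : lmax₂ ∈ spectrum ℝ (dhalf D * L * D⁻¹ * Lᵀ * dhalf D))
    (hmax₂ : ∀ lam ∈ spectrum ℝ (dhalf D * L * D⁻¹ * Lᵀ * dhalf D), lam ≤ lmax₂)
    (ω : ℝ) :
    ∀ lam ∈ spectrum ℝ (ssorG L D ω),
      (lmin + 1) * ω ^ 2 - 2 * ω + 2 ≤ lam ∧
        lam ≤ (lmax₁ + 2 * lmax₂ + 1) * ω ^ 2 - 2 * ω + 2 := by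
  classical
  set A := dhalf D * (L + Lᵀ) * dhalf D with hAdef
  set B := dhalf D * L * D⁻¹ * Lᵀ * dhalf D with hBdef
  -- dhalf D is Hermitian
  have hdh : (dhalf D).IsHermitian := by
    unfold dhalf
    simp [Matrix.IsHermitian, Matrix.diagonal_conjTranspose]
  -- A is Hermitian
  have hA : A.IsHermitian := by
    have h1 : (L + Lᵀ).IsHermitian := by
      unfold Matrix.IsHermitian
      rw [conjTranspose_eq_transpose_of_trivial]
      rw [transpose_add, transpose_transpose, add_comm]
    have hdht : (dhalf D)ᵀ = dhalf D := by
      have := hdh.eq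
      rwa [Matrix.conjTranspose_eq_transpose_of_trivial] at this
    have := isHermitian_mul_mul_conjTranspose (dhalf D) h1
    simpa [hAdef, hdht] using this
  -- D⁻¹ is PSD
  have hDinvEq : D⁻¹ = Matrix.diagonal fun i => (D i i)⁻¹ := by
    apply Matrix.inv_eq_right_inv
    ext i j
    rw [Matrix.mul_diagonal]
    by_cases h : i = j
    · subst h
      simp [mul_inv_cancel₀ (hDpos i).ne']
    · rw [hD h]
      simp [Matrix.one_apply_ne h]
  have hDinv : (D⁻¹).PosSemidef := by
    rw [hDinvEq]
    exact Matrix.posSemidef_diagonal_iff.mpr fun i => inv_nonneg.2 (hDpos i).le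
  -- B is PSD
  have hB : B.PosSemidef := by
    have h0 := hDinv.mul_mul_conjTranspose_same (dhalf D * L)
    have heq : dhalf D * L * D⁻¹ * (dhalf D * L)ᴴ = B := by
      rw [conjTranspose_mul, hdh.eq, conjTranspose_eq_transpose_of_trivial, hBdef,
        ← mul_assoc]
    rwa [heq] at h0
  intro lam hlam
  -- lower bound
  have hGlow : (ssorG L D ω - ((lmin + 1) * ω ^ 2 - 2 * ω + 2) • 1).PosSemidef := by
    have h1 : (A - lmin • 1).PosSemidef := aux_psd_of_lb hA hmin
    have h2 := aux_psd_add (aux_psd_smul h1 (sq_nonneg ω))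
      (aux_psd_smul hB (by positivity : (0:ℝ) ≤ 2 * ω ^ 2))
    have heq : ssorG L D ω - ((lmin + 1) * ω ^ 2 - 2 * ω + 2) • 1
        = ω ^ 2 • (A - lmin • 1) + (2 * ω ^ 2) • B := by
      unfold ssorG
      rw [← hAdef, ← hBdef]
      module
    rw [heq]
    exact h2
  have hGhigh : (((lmax₁ + 2 * lmax₂ + 1) * ω ^ 2 - 2 * ω + 2) • 1
      - ssorG L D ω).PosSemidef := by
    have h1 : (lmax₁ • 1 - A).PosSemidef := aux_psd_of_ub hA hmax₁
    have h2 : (lmax₂ • 1 - B).PosSemidef := aux_psd_of_ub hB.1 hmax₂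
    have h3 := aux_psd_add (aux_psd_smul h1 (sq_nonneg ω))
      (aux_psd_smul h2 (by positivity : (0:ℝ) ≤ 2 * ω ^ 2))
    have heq : ((lmax₁ + 2 * lmax₂ + 1) * ω ^ 2 - 2 * ω + 2) • 1 - ssorG L D ω
        = ω ^ 2 • (lmax₁ • 1 - A) + (2 * ω ^ 2) • (lmax₂ • 1 - B) := by
      unfold ssorG
      rw [← hAdef, ← hBdef]
      module
    rw [heq]
    exact h3
  constructor
  · have hmem : lam - ((lmin + 1) * ω ^ 2 - 2 * ω + 2)
        ∈ spectrum ℝ (ssorG L D ω - ((lmin + 1) * ω ^ 2 - 2 * ω + 2) • 1) := by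
      rw [show ((lmin + 1) * ω ^ 2 - 2 * ω + 2) • (1 : Matrix (Fin n) (Fin n) ℝ)
        = algebraMap ℝ _ ((lmin + 1) * ω ^ 2 - 2 * ω + 2) from
        (Algebra.algebraMap_eq_smul_one _).symm, ← spectrum.sub_singleton_eq]
      exact Set.sub_mem_sub hlam rfl
    have := aux_spec_nonneg hGlow hmem
    linarith
  · have hmem : ((lmax₁ + 2 * lmax₂ + 1) * ω ^ 2 - 2 * ω + 2) - lam
        ∈ spectrum ℝ (((lmax₁ + 2 * lmax₂ + 1) * ω ^ 2 - 2 * ω + 2) • 1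
          - ssorG L D ω) := by
      rw [show ((lmax₁ + 2 * lmax₂ + 1) * ω ^ 2 - 2 * ω + 2) • (1 : Matrix (Fin n) (Fin n) ℝ)
        = algebraMap ℝ _ ((lmax₁ + 2 * lmax₂ + 1) * ω ^ 2 - 2 * ω + 2) from
        (Algebra.algebraMap_eq_smul_one _).symm, ← spectrum.singleton_sub_eq]
      exact Set.sub_mem_sub rfl hlam
    have := aux_spec_nonneg hGhigh hmem
    linarith
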